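/- (Certifying reality) Let F : ℂⁿ → ℂⁿ be a polynomial system with real coefficients and let I be a strong interval approximate zero with witnesses x ∈ I and Y such that K_{x,Y}(I) ⊆ I and √2‖1ₙ − Y·□JF(I)‖_∞ < 1. If moreover the conjugate set {z̄ : z ∈ K_{x,Y}(I)} ⊆ I, then the unique zero of F in I is real (lies in ℝⁿ). -/

import Mathlib

open Set Pointwise

noncomputable section

/-- Pointwise addition of sets of reals. -/
def sadd (X Y : Set ℝ) : Set ℝ := Set.image2 (· + ·) X Y

/-- Pointwise subtraction of sets of reals. -/
def ssub (X Y : Set ℝ) : Set ℝ := Set.image2 (· - ·) X Y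

/-- Pointwise multiplication of sets of reals. -/
def smul' (X Y : Set ℝ) : Set ℝ := Set.image2 (· * ·) X Y

/-- The rectangular complex interval `X + iY`. -/
def cI (X Y : Set ℝ) : Set ℂ := {z | z.re ∈ X ∧ z.im ∈ Y}

/-- Real parts of a set of complex numbers. -/
def reS (S : Set ℂ) : Set ℝ := Complex.re '' S

/-- Imaginary parts of a set of complex numbers. -/
def imS (S : Set ℂ) : Set ℝ := Complex.im '' S

/-- Complex interval multiplication:
`(X+iY)·(W+iZ) = (X·W − Y·Z) + i(X·Z + Y·W)`. -/
def cmul (S T : Set ℂ) : Set ℂ :=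
  cI (ssub (smul' (reS S) (reS T)) (smul' (imS S) (imS T)))
     (sadd (smul' (reS S) (imS T)) (smul' (imS S) (reS T)))

/-- `S` is a rectangular complex interval. -/
def IsRect (S : Set ℂ) : Prop :=
  ∃ a b c d : ℝ, a ≤ b ∧ c ≤ d ∧ S = cI (Set.Icc a b) (Set.Icc c d)

variable {n : ℕ}

/-- The interval vector `I ∈ 𝕀ℂⁿ` determined by coordinate intervals `IV`. -/
def boxSet (IV : Fin n → Set ℂ) : Set (Fin n → ℂ) := {z | ∀ j, z j ∈ IV j}

/-- `F` is a square polynomial system. -/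
def IsPolyMap (F : (Fin n → ℂ) → Fin n → ℂ) : Prop :=
  ∀ i, ∃ p : MvPolynomial (Fin n) ℂ, ∀ z, F z i = MvPolynomial.eval z p

/-- The Jacobian matrix `JF(z)` of `F` at `z`. -/
def jac (F : (Fin n → ℂ) → Fin n → ℂ) (z : Fin n → ℂ) : Matrix (Fin n) (Fin n) ℂ :=
  fun i j => fderiv ℂ (fun w => F w i) z (Pi.single j 1)

/-- Entries of the interval matrix `1ₙ − Y·□JF(I)`, where `MJ` is the interval
enclosure of the Jacobian on `I`, computed in complex interval arithmetic. -/
def Bmat (Y : Matrix (Fin n) (Fin n) ℂ) (MJ : Fin n → Fin n → Set ℂ) :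
    Fin n → Fin n → Set ℂ :=
  fun i j => ({(if i = j then (1 : ℂ) else 0)} : Set ℂ) - ∑ k, cmul {Y i k} (MJ k j)

/-- Coordinates of the Krawczyk set
`K_{x,Y}(I) = x − Y·□F(x) + (1ₙ − Y·□JF(I))(I − x)`, where `FX` is the interval
enclosure `□F(x)` and `MJ` the interval enclosure `□JF(I)`. -/
def Kset (x : Fin n → ℂ) (Y : Matrix (Fin n) (Fin n) ℂ)
    (FX : Fin n → Set ℂ) (MJ : Fin n → Fin n → Set ℂ) (IV : Fin n → Set ℂ) :
    Fin n → Set ℂ :=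
  fun i => (({x i} : Set ℂ) - ∑ j, cmul {Y i j} (FX j)) +
      ∑ j, cmul ((IV j) - {x j}) (Bmat Y MJ i j)

/-- The `∞`-operator norm of a complex matrix (`Fin n → ℂ` carries the max norm). -/
def opNormInf (M : Matrix (Fin n) (Fin n) ℂ) : ℝ :=
  sSup {r | ∃ v : Fin n → ℂ, ‖v‖ = 1 ∧ r = ‖M.mulVec v‖}

/-- The norm `‖A‖_∞` of an interval matrix: the maximum of the `∞`-operator norms
over all matrices contained in it. -/
def imatNorm (B : Fin n → Fin n → Set ℂ) : ℝ :=
  sSup {r | ∃ M : Matrix (Fin n) (Fin n) ℂ, (∀ i j, M i j ∈ B i j) ∧ r = opNormInf M}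

/-- `F` is a square polynomial system with real coefficients. -/
def IsRealPolyMap (F : (Fin n → ℂ) → Fin n → ℂ) : Prop :=
  ∀ i, ∃ p : MvPolynomial (Fin n) ℝ,
    ∀ z, F z i = MvPolynomial.eval z (MvPolynomial.map (algebraMap ℝ ℂ) p)


section Aux
open MvPolynomial

/-- derivative CLM of a multivariate polynomial -/
def pD (q : MvPolynomial (Fin n) ℂ) (z : Fin n → ℂ) : (Fin n → ℂ) →L[ℂ] ℂ :=
  ∑ j, MvPolynomial.eval z (pderiv j q) • ContinuousLinearMap.proj j

lemma pD_apply (q : MvPolynomial (Fin n) ℂ) (z v : Fin n → ℂ) :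
    pD q z v = ∑ j, MvPolynomial.eval z (pderiv j q) * v j := by
  simp [pD, ContinuousLinearMap.sum_apply]

lemma poly_hasFDerivAt (q : MvPolynomial (Fin n) ℂ) (z : Fin n → ℂ) :
    HasFDerivAt (fun w => MvPolynomial.eval w q) (pD q z) z := by
  induction q using MvPolynomial.induction_on with
  | C a =>
      simp only [MvPolynomial.eval_C]
      have : pD (MvPolynomial.C a : MvPolynomial (Fin n) ℂ) z = 0 := by
        ext v; simp [pD_apply]
      rw [this]; exact hasFDerivAt_const a z
  | add p q hp hq =>
      have : pD (p + q) z = pD p z + pD q z := by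
        ext v; simp [pD_apply, Finset.sum_add_distrib, add_mul]
      rw [this]; simpa [Pi.add_def] using hp.add hq
  | mul_X p k hp =>
      have h1 : HasFDerivAt (fun w : Fin n → ℂ => w k)
          (ContinuousLinearMap.proj k : (Fin n → ℂ) →L[ℂ] ℂ) z := by
        exact (ContinuousLinearMap.proj k : (Fin n → ℂ) →L[ℂ] ℂ).hasFDerivAt
      have h := hp.mul h1
      have he : pD (p * MvPolynomial.X k) z =
          MvPolynomial.eval z p • (ContinuousLinearMap.proj k : (Fin n → ℂ) →L[ℂ] ℂ)
            + z k • pD p z := by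
        ext v
        simp only [ContinuousLinearMap.add_apply, ContinuousLinearMap.smul_apply,
          ContinuousLinearMap.proj_apply, pD_apply, smul_eq_mul, Finset.mul_sum]
        have : ∀ j : Fin n, (eval z) ((pderiv j) (p * X k)) * v j =
            (if j = k then (eval z) p * v j else 0) +
              z k * ((eval z) ((pderiv j) p) * v j) := by
          intro j
          by_cases hj : j = k <;>
            simp [pderiv_mul, hj, pderiv_X, Pi.single_apply] <;> ring
        rw [Finset.sum_congr rfl fun j _ => this j, Finset.sum_add_distrib]
        simp
      rw [he]
      simpa [MvPolynomial.eval_mul, MvPolynomial.eval_X, Pi.mul_def] using h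
lemma poly_continuous (q : MvPolynomial (Fin n) ℂ) :
    Continuous fun w : Fin n → ℂ => MvPolynomial.eval w q :=
  continuous_iff_continuousAt.2 fun z => (poly_hasFDerivAt q z).differentiableAt.continuousAt

/-- the segment from `x` to `w` -/
def seg (x w : Fin n → ℂ) (t : ℝ) : Fin n → ℂ := fun j => x j + (t : ℂ) * (w j - x j)

lemma seg_continuous (x w : Fin n → ℂ) : Continuous (seg x w) := by
  unfold seg
  exact continuous_pi fun j => continuous_const.add
    ((Complex.continuous_ofReal.mul continuous_const))

lemma hasDerivAt_seg_eval (q : MvPolynomial (Fin n) ℂ) (x w : Fin n → ℂ) (t : ℝ) :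
    HasDerivAt (fun s : ℝ => MvPolynomial.eval (seg x w s) q)
      (∑ j, MvPolynomial.eval (seg x w t) (pderiv j q) * (w j - x j)) t := by
  have hl : ∀ s : ℂ, HasDerivAt (fun s : ℂ => (fun j => x j + s * (w j - x j)))
      (fun j => w j - x j) s := by
    intro s
    rw [hasDerivAt_pi]
    intro j
    simpa using ((hasDerivAt_id s).mul_const (w j - x j)).const_add (x j)
  have hc : HasDerivAt (fun s : ℂ => MvPolynomial.eval (fun j => x j + s * (w j - x j)) q)
      (pD q (seg x w t) (fun j => w j - x j)) (t : ℂ) := by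
    have := (poly_hasFDerivAt q (seg x w t)).comp_hasDerivAt (t : ℂ) (hl (t : ℂ))
    exact this
  have := hc.comp_ofReal
  rw [pD_apply] at this; exact this

lemma seg_zero (x w : Fin n → ℂ) : seg x w 0 = x := by funext j; simp [seg]
lemma seg_one (x w : Fin n → ℂ) : seg x w 1 = w := by funext j; simp [seg]

/-- Mean value: entries given by integrals of partials along the segment. -/

lemma mean_value (q : MvPolynomial (Fin n) ℂ) (x w : Fin n → ℂ) :
    MvPolynomial.eval w q - MvPolynomial.eval x q =
      ∑ j, (∫ t in (0:ℝ)..1, MvPolynomial.eval (seg x w t) (pderiv j q)) * (w j - x j) := by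
  have hcont : ∀ j : Fin n, Continuous fun t : ℝ =>
      MvPolynomial.eval (seg x w t) (pderiv j q) := fun j =>
    (poly_continuous (pderiv j q)).comp (seg_continuous x w)
  have hint : ∀ j : Fin n, IntervalIntegrable
      (fun t : ℝ => MvPolynomial.eval (seg x w t) (pderiv j q) * (w j - x j))
      MeasureTheory.volume 0 1 := fun j =>
    (((hcont j).mul continuous_const)).intervalIntegrable 0 1
  have hint2 : IntervalIntegrable
      (fun t : ℝ => ∑ j, MvPolynomial.eval (seg x w t) (pderiv j q) * (w j - x j))
      MeasureTheory.volume 0 1 := by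
    have heq : (fun t : ℝ => ∑ j, MvPolynomial.eval (seg x w t) (pderiv j q) * (w j - x j))
        = ∑ j, (fun t : ℝ => MvPolynomial.eval (seg x w t) (pderiv j q) * (w j - x j)) := by
      funext t; simp
    rw [heq]
    exact IntervalIntegrable.sum Finset.univ fun j _ => hint j
  have hftc := intervalIntegral.integral_eq_sub_of_hasDerivAt
    (f := fun s : ℝ => MvPolynomial.eval (seg x w s) q)
    (f' := fun t => ∑ j, MvPolynomial.eval (seg x w t) (pderiv j q) * (w j - x j))
    (fun t _ => hasDerivAt_seg_eval q x w t) hint2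
  simp only [seg_one, seg_zero] at hftc
  rw [← hftc, intervalIntegral.integral_finset_sum (fun j _ => hint j)]
  refine Finset.sum_congr rfl fun j _ => ?_
  rw [intervalIntegral.integral_mul_const]

/-- integral of a continuous function staying in a closed rectangle stays there -/
lemma integral_mem_rect {f : ℝ → ℂ} (hf : Continuous f) {a b c d : ℝ}
    (h : ∀ t ∈ Set.Icc (0:ℝ) 1, f t ∈ cI (Set.Icc a b) (Set.Icc c d)) :
    (∫ t in (0:ℝ)..1, f t) ∈ cI (Set.Icc a b) (Set.Icc c d) := by
  have hfi : IntervalIntegrable f MeasureTheory.volume 0 1 := hf.intervalIntegrable 0 1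
  have hre : (∫ t in (0:ℝ)..1, f t).re = ∫ t in (0:ℝ)..1, (f t).re := by
    have h1 := (Complex.reCLM : ℂ →L[ℝ] ℝ).intervalIntegral_comp_comm hfi
    simp only [Complex.reCLM_apply] at h1
    exact h1.symm
  have him : (∫ t in (0:ℝ)..1, f t).im = ∫ t in (0:ℝ)..1, (f t).im := by
    have h1 := (Complex.imCLM : ℂ →L[ℝ] ℝ).intervalIntegral_comp_comm hfi
    simp only [Complex.imCLM_apply] at h1
    exact h1.symm
  have hrei : IntervalIntegrable (fun t => (f t).re) MeasureTheory.volume 0 1 :=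
    (Complex.continuous_re.comp hf).intervalIntegrable 0 1
  have himi : IntervalIntegrable (fun t => (f t).im) MeasureTheory.volume 0 1 :=
    (Complex.continuous_im.comp hf).intervalIntegrable 0 1
  have hci : IntervalIntegrable (fun _ : ℝ => (1:ℝ)) MeasureTheory.volume 0 1 := by
    simp [intervalIntegrable_const]
  constructor
  · rw [hre]
    constructor
    · have := intervalIntegral.integral_mono_on (f := fun _ => a)
        (g := fun t => (f t).re) (by norm_num) (intervalIntegrable_const) hrei
        (fun t ht => (h t ht).1.1)
      simpa using this
    · have := intervalIntegral.integral_mono_on (g := fun _ => b)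
        (f := fun t => (f t).re) (by norm_num) hrei (intervalIntegrable_const)
        (fun t ht => (h t ht).1.2)
      simpa using this
  · rw [him]
    constructor
    · have := intervalIntegral.integral_mono_on (f := fun _ => c)
        (g := fun t => (f t).im) (by norm_num) (intervalIntegrable_const) himi
        (fun t ht => (h t ht).2.1)
      simpa using this
    · have := intervalIntegral.integral_mono_on (g := fun _ => d)
        (f := fun t => (f t).im) (by norm_num) himi (intervalIntegrable_const)
        (fun t ht => (h t ht).2.2)
      simpa using this
lemma mem_cmul {S T : Set ℂ} {a b : ℂ} (ha : a ∈ S) (hb : b ∈ T) : a * b ∈ cmul S T := by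
  refine ⟨⟨a.re * b.re, ⟨a.re, ⟨a, ha, rfl⟩, b.re, ⟨b, hb, rfl⟩, rfl⟩,
          a.im * b.im, ⟨a.im, ⟨a, ha, rfl⟩, b.im, ⟨b, hb, rfl⟩, rfl⟩, ?_⟩,
         ⟨a.re * b.im, ⟨a.re, ⟨a, ha, rfl⟩, b.im, ⟨b, hb, rfl⟩, rfl⟩,
          a.im * b.re, ⟨a.im, ⟨a, ha, rfl⟩, b.re, ⟨b, hb, rfl⟩, rfl⟩, ?_⟩⟩
  · simp [Complex.mul_re]
  · simp [Complex.mul_im, add_comm]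

lemma mem_sum_sets {ι : Type*} (s : Finset ι) (f : ι → ℂ) (S : ι → Set ℂ)
    (h : ∀ i ∈ s, f i ∈ S i) : (∑ i ∈ s, f i) ∈ ∑ i ∈ s, S i := by
  classical
  induction s using Finset.induction_on with
  | empty => simp [Set.mem_zero]
  | insert a s' hx ih =>
      rw [Finset.sum_insert hx, Finset.sum_insert hx]
      exact Set.add_mem_add (h a (Finset.mem_insert_self a s'))
        (ih fun i hi => h i (Finset.mem_insert_of_mem hi))

lemma jac_eq {F : (Fin n → ℂ) → Fin n → ℂ} {i : Fin n} {q : MvPolynomial (Fin n) ℂ}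
    (hq : ∀ z, F z i = MvPolynomial.eval z q) (z : Fin n → ℂ) (j : Fin n) :
    jac F z i j = MvPolynomial.eval z (pderiv j q) := by
  have hfe : (fun w => F w i) = fun w => MvPolynomial.eval w q := funext hq
  unfold jac
  rw [hfe, (poly_hasFDerivAt q z).fderiv, pD_apply]
  simp [Pi.single_apply]

lemma conj_eval (p : MvPolynomial (Fin n) ℝ) (z : Fin n → ℂ) :
    MvPolynomial.eval (fun j => (starRingEnd ℂ) (z j)) (MvPolynomial.map (algebraMap ℝ ℂ) p)
      = (starRingEnd ℂ) (MvPolynomial.eval z (MvPolynomial.map (algebraMap ℝ ℂ) p)) := by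
  rw [MvPolynomial.eval_map, MvPolynomial.eval_map,
    MvPolynomial.eval₂_comp_left (starRingEnd ℂ)]
  congr 1
  ext r
  simp [Complex.conj_ofReal]

lemma seg_mem_rect {S : Set ℂ} (hS : IsRect S) {u v : ℂ} (hu : u ∈ S) (hv : v ∈ S)
    {t : ℝ} (ht : t ∈ Set.Icc (0:ℝ) 1) : u + (t:ℂ) * (v - u) ∈ S := by
  obtain ⟨a, b, c, d, _, _, rfl⟩ := hS
  obtain ⟨ht0, ht1⟩ := ht
  have hre : (u + (t:ℂ) * (v - u)).re = u.re + t * (v.re - u.re) := by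
    simp [Complex.mul_re]
  have him : (u + (t:ℂ) * (v - u)).im = u.im + t * (v.im - u.im) := by
    simp [Complex.mul_im]
  obtain ⟨⟨h1, h2⟩, h3, h4⟩ := hu
  obtain ⟨⟨h5, h6⟩, h7, h8⟩ := hv
  exact ⟨⟨by rw [hre]; nlinarith, by rw [hre]; nlinarith⟩,
         ⟨by rw [him]; nlinarith, by rw [him]; nlinarith⟩⟩

lemma seg_mem_box {IV : Fin n → Set ℂ} (hIV : ∀ j, IsRect (IV j)) {x w : Fin n → ℂ}
    (hx : x ∈ boxSet IV) (hw : w ∈ boxSet IV) {t : ℝ} (ht : t ∈ Set.Icc (0:ℝ) 1) :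
    seg x w t ∈ boxSet IV := fun j => seg_mem_rect (hIV j) (hx j) (hw j) ht

lemma exists_matrix_mean_value {F : (Fin n → ℂ) → Fin n → ℂ} (hF : IsRealPolyMap F)
    {IV : Fin n → Set ℂ} (hIV : ∀ j, IsRect (IV j))
    {MJ : Fin n → Fin n → Set ℂ} (hMJr : ∀ i j, IsRect (MJ i j))
    (hMJ : ∀ z ∈ boxSet IV, ∀ i j, jac F z i j ∈ MJ i j)
    {x w : Fin n → ℂ} (hx : x ∈ boxSet IV) (hw : w ∈ boxSet IV) :
    ∃ A : Matrix (Fin n) (Fin n) ℂ, (∀ i j, A i j ∈ MJ i j) ∧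
      ∀ i, F w i - F x i = ∑ j, A i j * (w j - x j) := by
  choose p hp using hF
  refine ⟨fun i j => ∫ t in (0:ℝ)..1,
      MvPolynomial.eval (seg x w t) (pderiv j (MvPolynomial.map (algebraMap ℝ ℂ) (p i))),
    ?_, ?_⟩
  · intro i j
    obtain ⟨a, b, c, d, _, _, hrect⟩ := hMJr i j
    rw [hrect]
    refine integral_mem_rect ((poly_continuous _).comp (seg_continuous x w)) ?_
    intro t ht
    have hm := hMJ (seg x w t) (seg_mem_box hIV hx hw ht) i j
    rw [jac_eq (hp i), hrect] at hm
    exact hm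
  · intro i
    rw [hp i w, hp i x]
    exact mean_value _ x w

lemma mem_Kset_of_zero {F : (Fin n → ℂ) → Fin n → ℂ}
    {IV : Fin n → Set ℂ} {x w : Fin n → ℂ}
    (hx : x ∈ boxSet IV) (hw : w ∈ boxSet IV)
    {Y : Matrix (Fin n) (Fin n) ℂ} {FX : Fin n → Set ℂ} (hFX : ∀ j, F x j ∈ FX j)
    {MJ : Fin n → Fin n → Set ℂ} {A : Matrix (Fin n) (Fin n) ℂ}
    (hA : ∀ i j, A i j ∈ MJ i j)
    (hAw : ∀ i, F w i - F x i = ∑ j, A i j * (w j - x j))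
    (hzero : F w = 0) :
    ∀ i, w i ∈ Kset x Y FX MJ IV i := by
  intro i
  have h0 : ∀ k, F w k = 0 := fun k => congrFun hzero k
  have key : w i = (x i - ∑ j, Y i j * F x j) +
      ∑ j, (w j - x j) * ((if i = j then (1:ℂ) else 0) - ∑ k, Y i k * A k j) := by
    have h1 : ∑ j, (w j - x j) * ((if i = j then (1:ℂ) else 0) - ∑ k, Y i k * A k j)
        = (w i - x i) - ∑ j, (w j - x j) * ∑ k, Y i k * A k j := by
      simp only [mul_sub]
      rw [Finset.sum_sub_distrib]
      congr 1
      simp [mul_ite]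
    have h2 : ∑ j, (w j - x j) * ∑ k, Y i k * A k j
        = ∑ k, Y i k * (F w k - F x k) := by
      simp only [Finset.mul_sum]
      rw [Finset.sum_comm]
      refine Finset.sum_congr rfl fun k _ => ?_
      rw [hAw k, Finset.mul_sum]
      refine Finset.sum_congr rfl fun j _ => by ring
    have h3 : ∑ k, Y i k * (F w k - F x k) = -∑ k, Y i k * F x k := by
      rw [← Finset.sum_neg_distrib]
      exact Finset.sum_congr rfl fun k _ => by rw [h0]; ring
    rw [h1, h2, h3]
    ring
  rw [key]
  refine Set.add_mem_add (Set.sub_mem_sub rfl ?_) ?_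
  · exact mem_sum_sets _ _ _ fun j _ => mem_cmul rfl (hFX j)
  · refine mem_sum_sets _ _ _ fun j _ => mem_cmul (Set.sub_mem_sub (hw j) rfl) ?_
    exact Set.sub_mem_sub rfl
      (mem_sum_sets _ _ _ fun k _ => mem_cmul rfl (hA k j))

/-- boundedness of a set of complexes with nonneg bound -/
def BddN (S : Set ℂ) : Prop := ∃ R : ℝ, 0 ≤ R ∧ ∀ m ∈ S, ‖m‖ ≤ R

lemma bddN_singleton (c : ℂ) : BddN {c} :=
  ⟨‖c‖, norm_nonneg c, fun m hm => by rw [Set.mem_singleton_iff] at hm; rw [hm]⟩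

lemma bddN_sub {S T : Set ℂ} (hS : BddN S) (hT : BddN T) : BddN (S - T) := by
  obtain ⟨R1, hR1, h1⟩ := hS; obtain ⟨R2, hR2, h2⟩ := hT
  refine ⟨R1 + R2, by linarith, fun m hm => ?_⟩
  obtain ⟨s, hs, t, ht, rfl⟩ := hm
  exact (norm_sub_le s t).trans (add_le_add (h1 s hs) (h2 t ht))

lemma bddN_rect {S : Set ℂ} (hS : IsRect S) : BddN S := by
  obtain ⟨a, b, c, d, _, _, rfl⟩ := hS
  refine ⟨|a| + |b| + |c| + |d|, by positivity, fun m hm => ?_⟩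
  obtain ⟨⟨h1, h2⟩, h3, h4⟩ := hm
  have hre : |m.re| ≤ |a| + |b| := by
    rw [abs_le]; constructor
    · have := neg_abs_le a; linarith [abs_nonneg b]
    · have := le_abs_self b; linarith [abs_nonneg a]
  have him : |m.im| ≤ |c| + |d| := by
    rw [abs_le]; constructor
    · have := neg_abs_le c; linarith [abs_nonneg d]
    · have := le_abs_self d; linarith [abs_nonneg c]
  calc ‖m‖ ≤ |m.re| + |m.im| := by
        exact Complex.norm_le_abs_re_add_abs_im m
    _ ≤ |a| + |b| + (|c| + |d|) := add_le_add hre him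
    _ = |a| + |b| + |c| + |d| := by ring

lemma bddN_cmul {S T : Set ℂ} (hS : BddN S) (hT : BddN T) : BddN (cmul S T) := by
  obtain ⟨R1, hR1, h1⟩ := hS; obtain ⟨R2, hR2, h2⟩ := hT
  have hres : ∀ r ∈ reS S, |r| ≤ R1 := by
    rintro r ⟨s, hs, rfl⟩
    exact (Complex.abs_re_le_norm s).trans (h1 s hs)
  have hims : ∀ r ∈ imS S, |r| ≤ R1 := by
    rintro r ⟨s, hs, rfl⟩
    exact (Complex.abs_im_le_norm s).trans (h1 s hs)
  have hret : ∀ r ∈ reS T, |r| ≤ R2 := by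
    rintro r ⟨s, hs, rfl⟩
    exact (Complex.abs_re_le_norm s).trans (h2 s hs)
  have himt : ∀ r ∈ imS T, |r| ≤ R2 := by
    rintro r ⟨s, hs, rfl⟩
    exact (Complex.abs_im_le_norm s).trans (h2 s hs)
  have hmul : ∀ {X : Set ℝ} {Z : Set ℝ},
      (∀ r ∈ X, |r| ≤ R1) → (∀ r ∈ Z, |r| ≤ R2) → ∀ r ∈ smul' X Z, |r| ≤ R1 * R2 := by
    rintro X Z hX hZ r ⟨u, hu, v, hv, rfl⟩
    rw [abs_mul]
    exact mul_le_mul (hX u hu) (hZ v hv) (abs_nonneg v) hR1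
  refine ⟨2 * (R1 * R2) + 2 * (R1 * R2), by positivity, fun m hm => ?_⟩
  obtain ⟨hmre, hmim⟩ := hm
  have hre : |m.re| ≤ 2 * (R1 * R2) := by
    obtain ⟨u, hu, v, hv, huv⟩ := hmre
    have := hmul hres hret u hu
    have := hmul hims himt v hv
    rw [← huv]
    calc |u - v| ≤ |u| + |v| := abs_sub _ _
      _ ≤ 2 * (R1 * R2) := by linarith
  have him : |m.im| ≤ 2 * (R1 * R2) := by
    obtain ⟨u, hu, v, hv, huv⟩ := hmim
    have := hmul hres himt u hu
    have := hmul hims hret v hv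
    rw [← huv]
    calc |u + v| ≤ |u| + |v| := abs_add_le _ _
      _ ≤ 2 * (R1 * R2) := by linarith
  calc ‖m‖ ≤ |m.re| + |m.im| := by
        exact Complex.norm_le_abs_re_add_abs_im m
    _ ≤ _ := add_le_add hre him

lemma bddN_sum {ι : Type*} (s : Finset ι) (S : ι → Set ℂ) (h : ∀ i ∈ s, BddN (S i)) :
    BddN (∑ i ∈ s, S i) := by
  classical
  induction s using Finset.induction_on with
  | empty =>
      refine ⟨0, le_refl 0, fun m hm => ?_⟩
      simp only [Finset.sum_empty] at hm
      rw [Set.mem_zero] at hm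
      simp [hm]
  | insert a s' hx ih =>
      rw [Finset.sum_insert hx]
      obtain ⟨R1, hR1, h1⟩ := h a (Finset.mem_insert_self a s')
      obtain ⟨R2, hR2, h2⟩ := ih fun i hi => h i (Finset.mem_insert_of_mem hi)
      refine ⟨R1 + R2, by linarith, fun m hm => ?_⟩
      obtain ⟨u, hu, v, hv, rfl⟩ := hm
      exact (norm_add_le u v).trans (add_le_add (h1 u hu) (h2 v hv))

lemma bddN_Bmat {Y : Matrix (Fin n) (Fin n) ℂ} {MJ : Fin n → Fin n → Set ℂ}
    (hMJr : ∀ i j, IsRect (MJ i j)) (i j : Fin n) : BddN (Bmat Y MJ i j) :=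
  bddN_sub (bddN_singleton _)
    (bddN_sum _ _ fun k _ => bddN_cmul (bddN_singleton _) (bddN_rect (hMJr k j)))

lemma norm_mulVec_le_sum (M : Matrix (Fin n) (Fin n) ℂ) (v : Fin n → ℂ) (hv : ‖v‖ = 1) :
    ‖M.mulVec v‖ ≤ ∑ i, ∑ j, ‖M i j‖ := by
  have hnn : (0:ℝ) ≤ ∑ i, ∑ j, ‖M i j‖ :=
    Finset.sum_nonneg fun i _ => Finset.sum_nonneg fun j _ => norm_nonneg _
  rw [pi_norm_le_iff_of_nonneg hnn]
  intro i
  have h1 : ‖M.mulVec v i‖ ≤ ∑ j, ‖M i j‖ := by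
    rw [Matrix.mulVec, dotProduct]
    refine (norm_sum_le _ _).trans (Finset.sum_le_sum fun j _ => ?_)
    rw [norm_mul]
    calc ‖M i j‖ * ‖v j‖ ≤ ‖M i j‖ * ‖v‖ :=
          mul_le_mul_of_nonneg_left (norm_le_pi_norm v j) (norm_nonneg _)
      _ = ‖M i j‖ := by rw [hv, mul_one]
  refine h1.trans (Finset.single_le_sum (f := fun i => ∑ j, ‖M i j‖)
    (fun i _ => Finset.sum_nonneg fun j _ => norm_nonneg _) (Finset.mem_univ i))

lemma opNormInf_le_sum (M : Matrix (Fin n) (Fin n) ℂ) :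
    opNormInf M ≤ ∑ i, ∑ j, ‖M i j‖ := by
  refine Real.sSup_le ?_ (Finset.sum_nonneg fun i _ => Finset.sum_nonneg fun j _ =>
    norm_nonneg _)
  rintro r ⟨v, hv, rfl⟩
  exact norm_mulVec_le_sum M v hv

lemma bddAbove_opNorm_set (M : Matrix (Fin n) (Fin n) ℂ) :
    BddAbove {r | ∃ v : Fin n → ℂ, ‖v‖ = 1 ∧ r = ‖M.mulVec v‖} := by
  refine ⟨∑ i, ∑ j, ‖M i j‖, ?_⟩
  rintro r ⟨v, hv, rfl⟩
  exact norm_mulVec_le_sum M v hv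

lemma norm_mulVec_le (M : Matrix (Fin n) (Fin n) ℂ) (v : Fin n → ℂ) :
    ‖M.mulVec v‖ ≤ opNormInf M * ‖v‖ := by
  by_cases hv : v = 0
  · simp [hv, Matrix.mulVec_zero]
  · have hnv : ‖v‖ ≠ 0 := norm_ne_zero_iff.2 hv
    set c : ℂ := (‖v‖ : ℂ) with hc
    have hcne : c ≠ 0 := by
      simp [hc, Complex.ofReal_eq_zero, hnv]
    set v₀ : Fin n → ℂ := c⁻¹ • v with hv₀
    have hnorm₀ : ‖v₀‖ = 1 := by
      rw [hv₀, norm_smul, norm_inv]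
      have : ‖c‖ = ‖v‖ := by
        rw [hc, Complex.norm_real, Real.norm_eq_abs, abs_of_nonneg (norm_nonneg v)]
      rw [this, inv_mul_cancel₀ hnv]
    have hmem : ‖M.mulVec v₀‖ ≤ opNormInf M :=
      le_csSup (bddAbove_opNorm_set M) ⟨v₀, hnorm₀, rfl⟩
    have hrepr : M.mulVec v = c • M.mulVec v₀ := by
      rw [hv₀, Matrix.mulVec_smul, smul_smul, mul_inv_cancel₀ hcne, one_smul]
    rw [hrepr, norm_smul]
    have hcv : ‖c‖ = ‖v‖ := by
      rw [hc, Complex.norm_real, Real.norm_eq_abs, abs_of_nonneg (norm_nonneg v)]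
    rw [hcv, mul_comm]
    exact mul_le_mul_of_nonneg_right hmem (norm_nonneg v)

lemma opNormInf_le_imatNorm {B : Fin n → Fin n → Set ℂ}
    (hB : ∀ i j, BddN (B i j)) (M : Matrix (Fin n) (Fin n) ℂ)
    (hM : ∀ i j, M i j ∈ B i j) : opNormInf M ≤ imatNorm B := by
  classical
  choose R hR0 hR using hB
  have hbdd : BddAbove {r | ∃ M' : Matrix (Fin n) (Fin n) ℂ,
      (∀ i j, M' i j ∈ B i j) ∧ r = opNormInf M'} := by
    refine ⟨∑ i, ∑ j, R i j, ?_⟩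
    rintro r ⟨M', hM', rfl⟩
    refine (opNormInf_le_sum M').trans ?_
    exact Finset.sum_le_sum fun i _ => Finset.sum_le_sum fun j _ => hR i j _ (hM' i j)
  exact le_csSup hbdd ⟨M, hM, rfl⟩

end Aux

theorem certify_reality (F : (Fin n → ℂ) → Fin n → ℂ) (hF : IsRealPolyMap F)
    (IV : Fin n → Set ℂ) (hIV : ∀ j, IsRect (IV j))
    (x : Fin n → ℂ) (hx : x ∈ boxSet IV)
    (Y : Matrix (Fin n) (Fin n) ℂ) (hY : IsUnit Y)
    (FX : Fin n → Set ℂ) (hFXr : ∀ j, IsRect (FX j)) (hFX : ∀ j, F x j ∈ FX j)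
    (MJ : Fin n → Fin n → Set ℂ) (hMJr : ∀ i j, IsRect (MJ i j))
    (hMJ : ∀ z ∈ boxSet IV, ∀ i j, jac F z i j ∈ MJ i j)
    (hK : ∀ i, Kset x Y FX MJ IV i ⊆ IV i)
    (hnorm : Real.sqrt 2 * imatNorm (Bmat Y MJ) < 1)
    (hconj : ∀ i, (fun w : ℂ => (starRingEnd ℂ) w) '' Kset x Y FX MJ IV i ⊆ IV i) :
    ∀ z ∈ boxSet IV, F z = 0 → ∀ j, (z j).im = 0 := by
  intro z hz hzero
  classical
  obtain ⟨A, hA, hAw⟩ := exists_matrix_mean_value hF hIV hMJr hMJ hx hz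
  have hzK : ∀ i, z i ∈ Kset x Y FX MJ IV i :=
    mem_Kset_of_zero hx hz hFX hA hAw hzero
  set zb : Fin n → ℂ := fun j => (starRingEnd ℂ) (z j) with hzb
  have hzbbox : zb ∈ boxSet IV := fun i => hconj i ⟨z i, hzK i, rfl⟩
  have hzb0 : F zb = 0 := by
    choose p hp using hF
    funext i
    have hzi : F z i = 0 := congrFun hzero i
    rw [hp i, hzb, conj_eval, ← hp i, hzi, map_zero, Pi.zero_apply]
  obtain ⟨A', hA', hAw'⟩ := exists_matrix_mean_value hF hIV hMJr hMJ hz hzbbox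
  set dvec : Fin n → ℂ := fun j => zb j - z j with hd
  have hAd : ∀ k, ∑ j, A' k j * dvec j = 0 := by
    intro k
    have h1 := hAw' k
    rw [congrFun hzb0 k, congrFun hzero k] at h1
    simp only [hd]
    rw [← h1]
    simp
  set Mm : Matrix (Fin n) (Fin n) ℂ :=
    fun i j => (if i = j then (1:ℂ) else 0) - ∑ k, Y i k * A' k j with hMm
  have hMmB : ∀ i j, Mm i j ∈ Bmat Y MJ i j := fun i j =>
    Set.sub_mem_sub rfl (mem_sum_sets _ _ _ fun k _ => mem_cmul rfl (hA' k j))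
  have hfix : Mm.mulVec dvec = dvec := by
    funext i
    show ∑ j, Mm i j * dvec j = dvec i
    simp only [hMm, sub_mul]
    rw [Finset.sum_sub_distrib]
    have e1 : ∑ j, (if i = j then (1:ℂ) else 0) * dvec j = dvec i := by simp
    have e2 : ∑ j, (∑ k, Y i k * A' k j) * dvec j = 0 := by
      calc ∑ j, (∑ k, Y i k * A' k j) * dvec j
          = ∑ j, ∑ k, Y i k * (A' k j * dvec j) := by
            refine Finset.sum_congr rfl fun j _ => ?_
            rw [Finset.sum_mul]
            exact Finset.sum_congr rfl fun k _ => by ring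
        _ = ∑ k, ∑ j, Y i k * (A' k j * dvec j) := Finset.sum_comm
        _ = ∑ k, Y i k * ∑ j, A' k j * dvec j := by
            exact Finset.sum_congr rfl fun k _ => (Finset.mul_sum _ _ _).symm
        _ = 0 := by simp [hAd]
    rw [e1, e2, sub_zero]
  have hd0 : dvec = 0 := by
    by_contra hne
    have h1 : ‖dvec‖ ≤ opNormInf Mm * ‖dvec‖ := by
      calc ‖dvec‖ = ‖Mm.mulVec dvec‖ := by rw [hfix]
        _ ≤ opNormInf Mm * ‖dvec‖ := norm_mulVec_le Mm dvec
    have h2 : opNormInf Mm ≤ imatNorm (Bmat Y MJ) :=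
      opNormInf_le_imatNorm (fun i j => bddN_Bmat hMJr i j) Mm hMmB
    have hpos : 0 < ‖dvec‖ := norm_pos_iff.2 hne
    have h3 : (1:ℝ) ≤ imatNorm (Bmat Y MJ) := by
      have h4 := h1.trans (mul_le_mul_of_nonneg_right h2 (norm_nonneg dvec))
      nlinarith
    have hs2 : (1:ℝ) < Real.sqrt 2 := by
      rw [show (1:ℝ) = Real.sqrt 1 from (Real.sqrt_one).symm]
      exact Real.sqrt_lt_sqrt (by norm_num) (by norm_num)
    nlinarith [hnorm]
  intro j
  have hj : zb j - z j = 0 := congrFun hd0 j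
  exact Complex.conj_eq_iff_im.mp (sub_eq_zero.mp hj)
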